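/- In the hypergeometric system dY/dλ = Y·G_a(λ) with G_a(λ) = [[-a₃/λ, (a₃-a₁)/(1-λ)], [(a₃-a₂)/λ, (a₁+a₂-a₃)/(1-λ)]], the row vector (u₁, u₂) with u₁ = (a₃-a₂)·F(a₁,a₂,a₃+1;λ) and u₂ = a₃·F(a₁,a₂,a₃;λ) is a formal solution, i.e., d/dλ (u₁, u₂) = (u₁, u₂)·G_a(λ) as formal power series identities in ℚ_p[[λ]] (multiplied through by λ(1-λ)). -/

import Mathlib

open PowerSeries

/-- The Gauss hypergeometric series `F(a,b,c;λ) ∈ ℚ_p[[λ]]`. -/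
noncomputable def gaussHGS (p : ℕ) [Fact p.Prime] (a b c : ℚ_[p]) : PowerSeries ℚ_[p] :=
  PowerSeries.mk fun s =>
    (∏ i ∈ Finset.range s, (a + (i : ℚ_[p]))) * (∏ i ∈ Finset.range s, (b + (i : ℚ_[p]))) /
      ((∏ i ∈ Finset.range s, (c + (i : ℚ_[p]))) * (s.factorial : ℚ_[p]))

private lemma hg_prod_ne_zero {K : Type*} [Field K] {c : K} (h : ∀ n : ℕ, c ≠ -(n : K))
    (n : ℕ) : ∏ i ∈ Finset.range n, (c + (i : K)) ≠ 0 :=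
  Finset.prod_ne_zero_iff.mpr fun i _ h0 => h i (eq_neg_of_add_eq_zero_left h0)

private lemma hg_prod_shift {K : Type*} [Field K] (c : K) (n : ℕ) :
    c * ∏ i ∈ Finset.range n, (c + 1 + (i : K)) =
      (∏ i ∈ Finset.range n, (c + (i : K))) * (c + n) := by
  induction n with
  | zero => simp
  | succ n ih =>
    rw [Finset.prod_range_succ, Finset.prod_range_succ, ← mul_assoc, ih]
    push_cast
    ring

private lemma hg_key1 {K : Type*} [Field K] (A₂ A₃ P Q R k m : K) (hA : A₃ ≠ 0) (hR : R ≠ 0)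
    (hk : k ≠ 0) (hm : A₃ + m ≠ 0) :
    (A₃ - A₂) * (P * Q / (R * (A₃ + m) / A₃ * k)) * m =
      -A₃ * ((A₃ - A₂) * (P * Q / (R * (A₃ + m) / A₃ * k))) +
        (A₃ - A₂) * (A₃ * (P * Q / (R * k))) := by
  field_simp
  ring

private lemma hg_key2 {K : Type*} [Field K] (A₁ A₂ A₃ P Q R k m : K) (hA : A₃ ≠ 0) (hR : R ≠ 0)
    (hk : k ≠ 0) (hm : A₃ + m ≠ 0) (hm1 : m + 1 ≠ 0) :
    A₃ * (P * (A₁ + m) * (Q * (A₂ + m)) / (R * (A₃ + m) * ((m + 1) * k))) * (m + 1) -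
        A₃ * (P * Q / (R * k)) * m =
      (A₃ - A₁) * ((A₃ - A₂) * (P * Q / (R * (A₃ + m) / A₃ * k))) +
        (A₁ + A₂ - A₃) * (A₃ * (P * Q / (R * k))) := by
  field_simp
  ring

private lemma hg_coeff_derivativeFun {R : Type*} [CommSemiring R] (f : PowerSeries R) (n : ℕ) :
    coeff n (derivativeFun f) = coeff (n + 1) f * (n + 1) :=
  coeff_derivative f n

/-- The row vector `(u₁, u₂) = ((a₃-a₂)F(a₁,a₂,a₃+1;λ), a₃F(a₁,a₂,a₃;λ))` is a formal
solution of the hypergeometric system `dY/dλ = Y·G_a(λ)`, i.e. (after clearing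
denominators) `λ·u₁' = -a₃·u₁ + (a₃-a₂)·u₂` and
`(1-λ)·u₂' = (a₃-a₁)·u₁ + (a₁+a₂-a₃)·u₂` in `ℚ_p[[λ]]`. -/
theorem hypergeometric_formal_solution (p : ℕ) [Fact p.Prime] (a₁ a₂ a₃ : ℤ_[p])
    (h3 : ∀ n : ℕ, (a₃ : ℚ_[p]) ≠ -(n : ℚ_[p]))
    (h3' : ∀ n : ℕ, (a₃ : ℚ_[p]) + 1 ≠ -(n : ℚ_[p])) :
    let A₁ : ℚ_[p] := (a₁ : ℚ_[p]); let A₂ : ℚ_[p] := (a₂ : ℚ_[p]); let A₃ : ℚ_[p] := (a₃ : ℚ_[p])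
    let u₁ : PowerSeries ℚ_[p] := C (A₃ - A₂) * gaussHGS p A₁ A₂ (A₃ + 1)
    let u₂ : PowerSeries ℚ_[p] := C A₃ * gaussHGS p A₁ A₂ A₃
    (X * derivativeFun u₁ = C (-A₃) * u₁ + C (A₃ - A₂) * u₂) ∧
    ((1 - X) * derivativeFun u₂ = C (A₃ - A₁) * u₁ + C (A₁ + A₂ - A₃) * u₂) := by
  intro A₁ A₂ A₃ u₁ u₂
  have hA₃ : A₃ ≠ 0 := by simpa [A₃] using h3 0
  have hR0 : ∀ n : ℕ, (∏ i ∈ Finset.range n, (A₃ + (i : ℚ_[p]))) ≠ 0 := hg_prod_ne_zero h3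
  have hA₃n : ∀ n : ℕ, A₃ + ((n : ℚ_[p]) + 1) ≠ 0 := by
    intro n h0
    refine h3 (n + 1) ?_
    push_cast
    linear_combination h0
  have hfac : ∀ n : ℕ, ((n.factorial : ℚ_[p])) ≠ 0 := by
    intro n; exact_mod_cast Nat.cast_ne_zero.mpr n.factorial_ne_zero
  have hshift : ∀ n : ℕ, (∏ i ∈ Finset.range n, (A₃ + 1 + (i : ℚ_[p]))) =
      (∏ i ∈ Finset.range n, (A₃ + (i : ℚ_[p]))) * (A₃ + n) / A₃ := by
    intro n
    rw [eq_div_iff hA₃, mul_comm, hg_prod_shift]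
  constructor
  · ext n
    cases n with
    | zero =>
      simp only [coeff_zero_X_mul, map_add, coeff_C_mul, u₁, u₂, gaussHGS,
        coeff_zero_eq_constantCoeff, map_mul, constantCoeff_C, constantCoeff_mk]
      simp
      ring
    | succ n =>
      rw [coeff_succ_X_mul, hg_coeff_derivativeFun]
      simp only [map_add, coeff_C_mul, u₁, u₂, gaussHGS, coeff_mk]
      rw [hshift (n + 1)]
      push_cast
      exact hg_key1 A₂ A₃ _ _ _ _ _ hA₃ (hR0 (n + 1)) (hfac (n + 1)) (hA₃n n)
  · rw [sub_mul, one_mul]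
    ext n
    rw [map_sub]
    cases n with
    | zero =>
      rw [coeff_zero_X_mul, sub_zero, hg_coeff_derivativeFun]
      simp only [map_add, coeff_C_mul, u₁, u₂, gaussHGS, coeff_mk]
      simp only [Finset.prod_range_succ, Finset.prod_range_zero, one_mul, Nat.cast_zero,
        add_zero, Nat.factorial_one, Nat.cast_one, mul_one, Nat.factorial_zero, div_one,
        zero_add, Finset.range_zero]
      field_simp
      ring
    | succ n =>
      rw [coeff_succ_X_mul, hg_coeff_derivativeFun, hg_coeff_derivativeFun]
      simp only [map_add, coeff_C_mul, u₁, u₂, gaussHGS, coeff_mk]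
      rw [hshift (n + 1)]
      rw [show n + 1 + 1 = n + 2 from rfl]
      rw [Finset.prod_range_succ (f := fun i => A₁ + (i : ℚ_[p])) (n := n + 1),
        Finset.prod_range_succ (f := fun i => A₂ + (i : ℚ_[p])) (n := n + 1),
        Finset.prod_range_succ (f := fun i => A₃ + (i : ℚ_[p])) (n := n + 1),
        Nat.factorial_succ (n + 1)]
      push_cast
      linear_combination hg_key2 A₁ A₂ A₃ (∏ i ∈ Finset.range (n + 1), (A₁ + (i : ℚ_[p])))
        (∏ i ∈ Finset.range (n + 1), (A₂ + (i : ℚ_[p])))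
        (∏ i ∈ Finset.range (n + 1), (A₃ + (i : ℚ_[p])))
        (((n + 1).factorial : ℚ_[p])) ((n : ℚ_[p]) + 1) hA₃ (hR0 (n + 1)) (hfac (n + 1))
        (hA₃n n) (by
          have : ((n : ℚ_[p]) + 1) + 1 = ((n + 2 : ℕ) : ℚ_[p]) := by push_cast; ring
          rw [this]
          exact_mod_cast Nat.succ_ne_zero (n + 1))
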